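/- With p_X(n) = det(Δ_a + Δ_n 𝒟_X) as above, for every subset I ⊆ {1,…,k}, the coefficient of the monomial ∏_{i∈I} n_i in p_X equals det((𝒟_X)_{I×I}) · ∏_{j∉I} (−2 d(x_j, X∖{x_j})), where (𝒟_X)_{I×I} is the principal submatrix of 𝒟_X on rows and columns indexed by I. -/

import Mathlib

open Matrix MvPolynomial BigOperators Finset Equiv Equiv.Perm

lemma sumSingle_apply {k : ℕ} (s : Finset (Fin k)) (j : Fin k) :
    (∑ i ∈ s, Finsupp.single i (1:ℕ)) j = if j ∈ s then 1 else 0 := by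
  rw [Finset.sum_apply']
  simp [Finsupp.single_apply]

lemma sumSingle_inj {k : ℕ} {s t : Finset (Fin k)}
    (h : (∑ i ∈ s, Finsupp.single i (1:ℕ)) = ∑ i ∈ t, Finsupp.single i 1) : s = t := by
  ext j
  have := DFunLike.congr_fun h j
  rw [sumSingle_apply, sumSingle_apply] at this
  by_cases hs : j ∈ s <;> by_cases ht : j ∈ t <;> simp [hs, ht] at this ⊢

lemma prod_X_eq {k : ℕ} (s : Finset (Fin k)) (f : Fin k → Fin k) :
    (∏ i ∈ s, (X (f i) : MvPolynomial (Fin k) ℝ)) =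
      monomial (∑ i ∈ s, Finsupp.single (f i) 1) 1 := by
  induction s using Finset.induction_on with
  | empty => simp
  | @insert _ _ h ih =>
      rw [Finset.prod_insert h, Finset.sum_insert h, ih, X, monomial_mul, one_mul]

lemma key {k : ℕ} (a : Fin k → ℝ) (B : Fin k → Fin k → ℝ) (I : Finset (Fin k)) :
    MvPolynomial.coeff (∑ i ∈ I, Finsupp.single i 1)
      ((Matrix.diagonal (fun i => MvPolynomial.C (a i)) +
        Matrix.diagonal (fun i => (MvPolynomial.X i : MvPolynomial (Fin k) ℝ)) *
          (Matrix.of fun i j => MvPolynomial.C (B i j))).det) =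
      ((Matrix.of B).submatrix
          (fun x : {x : Fin k // x ∈ I} => (x : Fin k))
          (fun x : {x : Fin k // x ∈ I} => (x : Fin k))).det * ∏ j ∈ Iᶜ, a j := by
  classical
  set m : Fin k →₀ ℕ := ∑ i ∈ I, Finsupp.single i 1 with hm
  set M : Matrix (Fin k) (Fin k) (MvPolynomial (Fin k) ℝ) :=
    Matrix.diagonal (fun i => MvPolynomial.C (a i)) +
      Matrix.diagonal (fun i => (MvPolynomial.X i : MvPolynomial (Fin k) ℝ)) *
        (Matrix.of fun i j => MvPolynomial.C (B i j)) with hM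
  rw [Matrix.det_apply']
  have hentry : ∀ (σ : Equiv.Perm (Fin k)) (i : Fin k),
      M (σ i) i = X (σ i) * C (B (σ i) i) + (if σ i = i then C (a i) else 0) := by
    intro σ i
    by_cases h : σ i = i <;>
      simp [hM, Matrix.add_apply, Matrix.diagonal_apply, Matrix.diagonal_mul, h, add_comm]
  simp_rw [hentry, Finset.prod_add]
  rw [MvPolynomial.coeff_sum]
  simp_rw [← map_intCast (C : ℝ →+* MvPolynomial (Fin k) ℝ), coeff_C_mul,
    MvPolynomial.coeff_sum]
  have key : ∀ σ : Equiv.Perm (Fin k), ∀ t ∈ (Finset.univ : Finset (Fin k)).powerset,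
      MvPolynomial.coeff m
        ((∏ i ∈ t, X (σ i) * C (B (σ i) i)) *
          ∏ i ∈ Finset.univ \ t, if σ i = i then C (a i) else 0)
      = if t = I ∧ ∀ i ∈ Iᶜ, σ i = i then
          (∏ i ∈ I, B (σ i) i) * ∏ j ∈ Iᶜ, a j else 0 := by
    intro σ t _
    by_cases hfix : ∀ i ∈ Finset.univ \ t, σ i = i
    · have hdiag : (∏ i ∈ Finset.univ \ t, if σ i = i then C (a i)
            else (0 : MvPolynomial (Fin k) ℝ))
          = C (∏ i ∈ Finset.univ \ t, a i) := by
        rw [map_prod]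
        exact Finset.prod_congr rfl fun i hi => if_pos (hfix i hi)
      have himg : ∀ i ∈ t, σ i ∈ t := by
        intro i hi
        by_contra hni
        have h1 : σ (σ i) = σ i :=
          hfix _ (Finset.mem_sdiff.mpr ⟨Finset.mem_univ _, hni⟩)
        have h2 := σ.injective h1
        rw [h2] at hni; exact hni hi
      have himage : t.image σ = t :=
        Finset.eq_of_subset_of_card_le
          (fun j hj => by
            obtain ⟨i, hi, rfl⟩ := Finset.mem_image.mp hj; exact himg i hi)
          (le_of_eq (Finset.card_image_of_injective _ σ.injective).symm)
      have hsum : (∑ i ∈ t, Finsupp.single (σ i) (1:ℕ)) = ∑ i ∈ t, Finsupp.single i 1 := by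
        conv_rhs => rw [← himage, Finset.sum_image (fun x _ y _ h => σ.injective h)]
      rw [Finset.prod_mul_distrib, prod_X_eq, ← map_prod, hdiag, hsum,
        C_apply, C_apply, monomial_mul, monomial_mul, coeff_monomial]
      by_cases htI : t = I
      · subst htI
        rw [if_pos, if_pos]
        · rw [one_mul, ← Finset.compl_eq_univ_sdiff]
        · refine ⟨rfl, fun i hi => hfix i ?_⟩
          rw [← Finset.compl_eq_univ_sdiff]; exact hi
        · simp [add_zero, hm]
      · rw [if_neg, if_neg]
        · exact fun h => htI h.1
        · intro h
          simp only [add_zero] at h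
          exact htI (sumSingle_inj (h.trans hm))
    · push_neg at hfix
      obtain ⟨i, hi, hne⟩ := hfix
      have hz : (if σ i = i then C (a i) else (0 : MvPolynomial (Fin k) ℝ)) = 0 := if_neg hne
      rw [Finset.prod_eq_zero hi hz, mul_zero, coeff_zero, if_neg]
      rintro ⟨rfl, hfixI⟩
      exact hne (hfixI i (by rw [← Finset.compl_eq_univ_sdiff] at hi; exact hi))
  calc (∑ σ : Equiv.Perm (Fin k), ((Equiv.Perm.sign σ : ℤ) : ℝ) *
          ∑ t ∈ (Finset.univ : Finset (Fin k)).powerset,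
            MvPolynomial.coeff m
              ((∏ i ∈ t, X (σ i) * C (B (σ i) i)) *
                ∏ i ∈ Finset.univ \ t, if σ i = i then C (a i) else 0))
      = ∑ σ : Equiv.Perm (Fin k), ((Equiv.Perm.sign σ : ℤ) : ℝ) *
          (if ∀ i ∈ Iᶜ, σ i = i then
            (∏ i ∈ I, B (σ i) i) * ∏ j ∈ Iᶜ, a j else 0) := by
        refine Finset.sum_congr rfl fun σ _ => ?_
        congr 1
        rw [Finset.sum_congr rfl (key σ)]
        simp_rw [ite_and]
        rw [Finset.sum_ite_eq' _ I]
        simp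
    _ = ((Matrix.of B).submatrix
          (fun x : {x : Fin k // x ∈ I} => (x : Fin k))
          (fun x : {x : Fin k // x ∈ I} => (x : Fin k))).det * ∏ j ∈ Iᶜ, a j := by
        simp_rw [mul_ite, mul_zero]
        rw [← Finset.sum_filter, Matrix.det_apply', Finset.sum_mul]
        have hmem : ∀ σ : Equiv.Perm (Fin k), (∀ i ∈ Iᶜ, σ i = i) →
            ∀ x, x ∈ I ↔ σ x ∈ I := by
          intro σ hP x
          constructor
          · intro hx
            by_contra h
            have h1 : σ (σ x) = σ x := hP (σ x) (Finset.mem_compl.mpr h)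
            have h2 := σ.injective h1
            rw [h2] at h; exact h hx
          · intro hx
            by_contra h
            rw [hP x (Finset.mem_compl.mpr h)] at hx; exact h hx
        have hmem' : ∀ σ : Equiv.Perm (Fin k), (∀ i ∈ Iᶜ, σ i = i) →
            ∀ x, σ x ∈ I ↔ x ∈ I := fun σ hP x => (hmem σ hP x).symm
        refine Finset.sum_bij'
          (fun σ hσ => σ.subtypePerm (hmem' σ (by simpa using hσ)))
          (fun τ _ => Equiv.Perm.ofSubtype τ) ?_ ?_ ?_ ?_ ?_
        · intro σ hσ; exact Finset.mem_univ _
        · intro τ _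
          simp only [Finset.mem_filter, Finset.mem_univ, true_and]
          intro i hi
          exact Equiv.Perm.ofSubtype_apply_of_not_mem τ (Finset.mem_compl.mp hi)
        · intro σ hσ
          apply Equiv.Perm.ofSubtype_subtypePerm
          intro x hx
          by_contra hxI
          exact hx ((by simpa using hσ : ∀ i ∈ Iᶜ, σ i = i) x (Finset.mem_compl.mpr hxI))
        · intro τ _
          ext x
          simp [Equiv.Perm.subtypePerm_apply]
        · intro σ hσ
          have hP : ∀ i ∈ Iᶜ, σ i = i := by simpa using hσ
          have hsign : Equiv.Perm.sign (σ.subtypePerm (hmem' σ hP)) = Equiv.Perm.sign σ := by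
            conv_rhs => rw [← Equiv.Perm.ofSubtype_subtypePerm (hmem' σ hP)
              (fun x hx => by
                by_contra hxI
                exact hx (hP x (Finset.mem_compl.mpr hxI)))]
            rw [Equiv.Perm.sign_ofSubtype]
          rw [← hsign, ← mul_assoc]
          congr 1
          congr 1
          rw [← Finset.prod_coe_sort I (fun i => B (σ i) i)]
          refine Finset.prod_congr rfl fun x _ => ?_
          simp [Matrix.submatrix_apply, Equiv.Perm.subtypePerm_apply]


/-- for the blowup-polynomial `p_X(n) = det(Δ_a + Δ_n 𝒟_X)` of a finite
metric space, the coefficient of `∏_{i ∈ I} n_i` equals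
`det((𝒟_X)_{I×I}) * ∏_{j ∉ I} (-2 d(x_j, X∖{x_j}))`. -/
theorem blowup_poly_coeff (k : ℕ) (hk : 2 ≤ k)
    (d : Fin k → Fin k → ℝ) (e : Fin k → ℝ)
    (hd0 : ∀ i, d i i = 0) (hsymm : ∀ i j, d i j = d j i)
    (hpos : ∀ i j, i ≠ j → 0 < d i j)
    (htri : ∀ i j l, d i l ≤ d i j + d j l)
    (he : ∀ i, IsLeast {r : ℝ | ∃ j, j ≠ i ∧ r = d i j} (e i)) :
    ∀ P : MvPolynomial (Fin k) ℝ,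
      P = (Matrix.diagonal (fun i => MvPolynomial.C (-2 * e i)) +
            Matrix.diagonal (fun i => (MvPolynomial.X i : MvPolynomial (Fin k) ℝ)) *
              (Matrix.of fun i j => MvPolynomial.C (if i = j then 2 * e i else d i j))).det →
      ∀ I : Finset (Fin k),
        MvPolynomial.coeff (∑ i ∈ I, Finsupp.single i 1) P =
          ((Matrix.of fun i j : Fin k => if i = j then 2 * e i else d i j).submatrix
              (fun x : {x : Fin k // x ∈ I} => (x : Fin k))
              (fun x : {x : Fin k // x ∈ I} => (x : Fin k))).det *
            ∏ j ∈ Iᶜ, (-2 * e j) := by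
  intro P hP I
  subst hP
  exact key (fun i => -2 * e i) (fun i j => if i = j then 2 * e i else d i j) I
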